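/- A priori condition ensuring the faithful-rounding criterion for compensated Horner (core of Theorem 4): Let u be a real number with 0 < u < 1, let n be a positive integer with 2n·u < 1, and let P, P̃, r̂, c, ĉ, r̄ be real numbers with P̃ ≥ 0 and P ≠ 0. Suppose that P = r̂ + c, that |ĉ − c| ≤ γ_{2n−1}·γ_{2n}·P̃, that r̄ = (r̂ + ĉ)·(1+ε) for some ε with |ε| ≤ u, and that P̃/|P| < ((1−u)/(2+u)) · u · γ_{2n}^{−2}. Then r̄·P > 0 (the compensated result has the same sign as the exact value) and |ĉ − c| < (u/2)·|r̄|. -/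
import Mathlib

set_option maxHeartbeats 1000000

/-- Arithmetic core: if `|e| < B·|P|` with `B = (1−u)/(2+u)·u`, then the
product `(P+e)(1+ε)` has the same sign as `P` and dominates `|e|/(u/2)`. -/
lemma aux_faithful_core (u B P e eps : ℝ) (hu : 0 < u) (hu1 : u < 1)
    (hBval : B = (1 - u) / (2 + u) * u) (hP0 : P ≠ 0)
    (he : |e| < B * |P|) (heps : |eps| ≤ u) :
    ((P + e) * (1 + eps)) * P > 0 ∧ |e| < u / 2 * |(P + e) * (1 + eps)| := by
  have h2u : (0:ℝ) < 2 + u := by linarith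
  have hPpos : 0 < |P| := abs_pos.mpr hP0
  have hBpos : 0 < B := by
    rw [hBval]
    exact mul_pos (div_pos (by linarith) h2u) hu
  have hB1 : 1 - B = (2 + u ^ 2) / (2 + u) := by
    rw [hBval]; field_simp; ring
  have hBlt1 : B < 1 := by
    have h : 0 < (2 + u ^ 2) / (2 + u) := by positivity
    linarith
  have heps' := abs_le.mp heps
  have heps1 : 0 < 1 + eps := by linarith [heps'.1]
  have habsPP : |P| * |P| = P ^ 2 := by rw [← sq_abs P]; ring
  have hP2 : 0 < P ^ 2 := by positivity
  have heP : -(B * P ^ 2) < e * P := by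
    have h1 : -|e * P| ≤ e * P := neg_abs_le _
    have h2 : |e * P| = |e| * |P| := abs_mul _ _
    have h3 := mul_lt_mul_of_pos_right he hPpos
    nlinarith
  have hsum : 0 < P ^ 2 + e * P := by
    nlinarith [mul_pos (sub_pos.mpr hBlt1) hP2]
  constructor
  · have h : ((P + e) * (1 + eps)) * P = (1 + eps) * (P ^ 2 + e * P) := by ring
    rw [h]; exact mul_pos heps1 hsum
  · have h4 : |P| - |e| ≤ |P + e| := by
      have h := abs_add_le (P + e) (-e)
      simp only [add_neg_cancel_right, abs_neg] at h
      linarith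
    have hPe : 0 ≤ |P| - |e| := by nlinarith
    have hrabs : (1 - u) * (|P| - |e|) ≤ |(P + e) * (1 + eps)| := by
      rw [abs_mul, abs_of_pos heps1]
      calc (1 - u) * (|P| - |e|) ≤ (1 + eps) * |P + e| :=
            mul_le_mul (by linarith [heps'.1]) h4 hPe heps1.le
        _ = |P + e| * (1 + eps) := mul_comm _ _
    have hKey : B ≤ u / 2 * (1 - u) * (1 - B) := by
      have hd : u / 2 * (1 - u) * (1 - B) - B = (1 - u) * u ^ 3 / (2 * (2 + u)) := by
        rw [hBval]; field_simp; ring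
      have hnn : 0 ≤ (1 - u) * u ^ 3 / (2 * (2 + u)) := by
        apply div_nonneg (mul_nonneg (by linarith) (by positivity)) (by linarith)
      linarith
    have hu2 : (0:ℝ) < u / 2 * (1 - u) := mul_pos (by linarith) (by linarith)
    have h5 : 0 < B * |P| - |e| := by linarith
    have hA := mul_le_mul_of_nonneg_left hrabs (by linarith : (0:ℝ) ≤ u / 2)
    have hB' := mul_le_mul_of_nonneg_right hKey hPpos.le
    have hC := mul_pos hu2 h5
    nlinarith [hA, hB', hC, he]

/-- A priori condition ensuring the faithful-rounding criterion for compensated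
Horner (core of Theorem 4). Here `γ_k = k·u/(1 − k·u)`, `P̃/|P|` is the
condition number, and the conclusion `|ĉ − c| < (u/2)·|r̄|` is the criterion
guaranteeing that `r̄` is a faithful rounding of the exact value `P`. -/
theorem a_priori_faithful_rounding_criterion
    (u : ℝ) (hu : 0 < u) (hu1 : u < 1)
    (n : ℕ) (hn : 1 ≤ n) (h2nu : 2 * (n : ℝ) * u < 1)
    (P Ptilde rhat c chat rbar ε : ℝ) (hPt : 0 ≤ Ptilde) (hP0 : P ≠ 0)
    (hP : P = rhat + c)
    (hc : |chat - c| ≤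
      ((2 * (n : ℝ) - 1) * u / (1 - (2 * (n : ℝ) - 1) * u)) *
        (2 * (n : ℝ) * u / (1 - 2 * (n : ℝ) * u)) * Ptilde)
    (hε : |ε| ≤ u)
    (hrbar : rbar = (rhat + chat) * (1 + ε))
    (hcond : Ptilde / |P| <
      (1 - u) / (2 + u) * u *
        ((2 * (n : ℝ) * u / (1 - 2 * (n : ℝ) * u)) ^ 2)⁻¹) :
    rbar * P > 0 ∧ |chat - c| < u / 2 * |rbar| := by
  have hn1 : (1:ℝ) ≤ (n:ℝ) := by exact_mod_cast hn
  have ha0 : 0 < 2 * (n:ℝ) * u := by nlinarith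
  have ha1 : 0 < 1 - 2 * (n:ℝ) * u := by linarith
  have hb0 : 0 < (2 * (n:ℝ) - 1) * u := by nlinarith
  have hb1 : 0 < 1 - (2 * (n:ℝ) - 1) * u := by nlinarith
  set g : ℝ := 2 * (n:ℝ) * u / (1 - 2 * (n:ℝ) * u) with hg
  set g1 : ℝ := (2 * (n:ℝ) - 1) * u / (1 - (2 * (n:ℝ) - 1) * u) with hg1
  have hgpos : 0 < g := div_pos ha0 ha1
  have hg1pos : 0 < g1 := div_pos hb0 hb1
  have hg1le : g1 ≤ g := by
    rw [hg1, hg, div_le_div_iff₀ hb1 ha1]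
    nlinarith
  have hPpos : 0 < |P| := abs_pos.mpr hP0
  set B : ℝ := (1 - u) / (2 + u) * u with hB
  have hg2 : (0:ℝ) < g ^ 2 := by positivity
  have hcond' : Ptilde < B * (g ^ 2)⁻¹ * |P| := by
    rw [div_lt_iff₀ hPpos] at hcond
    exact hcond
  have key : g ^ 2 * Ptilde < B * |P| := by
    have h := mul_lt_mul_of_pos_left hcond' hg2
    have heq : g ^ 2 * (B * (g ^ 2)⁻¹ * |P|) = B * |P| := by
      field_simp
    linarith [h, heq.le, heq.ge]
  have hE : |chat - c| < B * |P| := by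
    have h1 : g1 * g * Ptilde ≤ g * g * Ptilde := by
      have := mul_le_mul_of_nonneg_right (mul_le_mul_of_nonneg_right hg1le hgpos.le) hPt
      linarith
    have h2 : g * g * Ptilde = g ^ 2 * Ptilde := by ring
    linarith
  have hre : rbar = (P + (chat - c)) * (1 + ε) := by
    rw [hrbar, hP]; ring
  obtain ⟨hs1, hs2⟩ := aux_faithful_core u B P (chat - c) ε hu hu1 hB hP0 hE hε
  exact ⟨by rw [hre]; exact hs1, by rw [hre]; exact hs2⟩
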